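/- The greedy knapsack heuristic produces a feasible solution whose profit differs from the Dantzig upper bound by less than p_b, the profit of the break item: if the greedy algorithm adds items in order of nonincreasing profit-to-weight ratio, skipping any item that does not fit, then its resulting profit P satisfies P ≥ ∑_{i=1}^{b-1} p_i, and consequently U − P < p_b where U is the Dantzig bound U = p_b·(c − ∑_{i=1}^{b-1} w_i)/w_b + ∑_{i=1}^{b-1} p_i. -/

import Mathlib

/-- `greedy w p n i r` : total profit obtained by the greedy knapsack
heuristic on items `i, i+1, …, n-1` with remaining capacity `r`, adding each
item whose weight still fits. -/
def greedy (w p : ℕ → ℕ) (n : ℕ) (i r : ℕ) : ℕ :=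
  if _h : i < n then
    if w i ≤ r then p i + greedy w p n (i + 1) (r - w i)
    else greedy w p n (i + 1) r
  else 0
termination_by n - i
decreasing_by all_goals omega

lemma greedy_ge (w p : ℕ → ℕ) (n b : ℕ) (hbn : b ≤ n) :
    ∀ i r, ∑ j ∈ Finset.Ico i b, w j ≤ r →
      ∑ j ∈ Finset.Ico i b, p j ≤ greedy w p n i r
  | i, r, h => by
    rw [greedy]
    by_cases hib : i < b
    · have hin : i < n := lt_of_lt_of_le hib hbn
      rw [Finset.sum_eq_sum_Ico_succ_bot hib] at h
      rw [Finset.sum_eq_sum_Ico_succ_bot hib]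
      have hwi : w i ≤ r := le_trans (Nat.le_add_right _ _) h
      rw [dif_pos hin, if_pos hwi]
      have := greedy_ge w p n b hbn (i + 1) (r - w i) (by omega)
      omega
    · have he : Finset.Ico i b = ∅ := by rw [Finset.Ico_eq_empty]; omega
      simp [he]
  termination_by i r _ => n - i

/-- The greedy knapsack heuristic collects at least the profit of all items
before the break item, and its profit is within `p b` of the Dantzig bound. -/
theorem greedy_close_to_dantzig (n : ℕ) (w p : ℕ → ℕ) (c : ℕ)
    (hw : ∀ i, 0 < w i) (hp : ∀ i, 0 < p i)
    (hsort : ∀ i, i + 1 < n → (p (i + 1) : ℚ) / (w (i + 1) : ℚ) ≤ (p i : ℚ) / (w i : ℚ))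
    (b : ℕ) (hbn : b < n)
    (hb1 : ∑ i ∈ Finset.range b, w i ≤ c)
    (hb2 : c < ∑ i ∈ Finset.range (b + 1), w i) :
    (∑ i ∈ Finset.range b, p i ≤ greedy w p n 0 c) ∧
    ((p b : ℚ) * (((c : ℚ) - ∑ i ∈ Finset.range b, (w i : ℚ)) / (w b : ℚ)) +
        (∑ i ∈ Finset.range b, (p i : ℚ))) - (greedy w p n 0 c : ℚ) < (p b : ℚ) := by
  have h1 : ∑ i ∈ Finset.range b, p i ≤ greedy w p n 0 c := by
    rw [Finset.range_eq_Ico]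
    exact greedy_ge w p n b hbn.le 0 c (by rwa [← Finset.range_eq_Ico])
  refine ⟨h1, ?_⟩
  have hb2' : (c : ℚ) - ∑ i ∈ Finset.range b, (w i : ℚ) < (w b : ℚ) := by
    rw [Finset.sum_range_succ] at hb2
    have : (c : ℚ) < (∑ i ∈ Finset.range b, (w i : ℚ)) + (w b : ℚ) := by
      push_cast
      exact_mod_cast (by exact_mod_cast hb2 : (c : ℚ) < ((∑ i ∈ Finset.range b, w i + w b : ℕ) : ℚ))
    linarith
  have hwb : (0 : ℚ) < (w b : ℚ) := by exact_mod_cast hw b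
  have hpb : (0 : ℚ) < (p b : ℚ) := by exact_mod_cast hp b
  have hfrac : ((c : ℚ) - ∑ i ∈ Finset.range b, (w i : ℚ)) / (w b : ℚ) < 1 :=
    (div_lt_one hwb).mpr hb2'
  have hmul : (p b : ℚ) * (((c : ℚ) - ∑ i ∈ Finset.range b, (w i : ℚ)) / (w b : ℚ)) < (p b : ℚ) := by
    nlinarith
  have hP : (∑ i ∈ Finset.range b, (p i : ℚ)) ≤ (greedy w p n 0 c : ℚ) := by
    exact_mod_cast h1
  linarith
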